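/- Let g be a finite-dimensional complex semisimple Lie algebra, p = l ⊕ u a parabolic subalgebra with Levi factor l, and let N ↪ N' be an embedding of weight l-modules with N simple. Then the almost-simple quotient Ind_p(N) embeds into the almost-simple quotient Ind_p(N'). -/

import Mathlib

section ProdLie

variable {g : Type*} [LieRing g] {M M' : Type*}
  [AddCommGroup M] [AddCommGroup M'] [LieRingModule g M] [LieRingModule g M']

instance prodLieRingModule : LieRingModule g (M × M') where
  bracket x m := (⁅x, m.1⁆, ⁅x, m.2⁆)
  add_lie x y m := Prod.ext (add_lie x y m.1) (add_lie x y m.2)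
  lie_add x m n := Prod.ext (lie_add x m.1 n.1) (lie_add x m.2 n.2)
  leibniz_lie x y m := Prod.ext (leibniz_lie x y m.1) (leibniz_lie x y m.2)

@[simp] theorem prod_lie_def (x : g) (m : M × M') :
    ⁅x, m⁆ = (⁅x, m.1⁆, ⁅x, m.2⁆) := rfl

instance prodLieModule [LieAlgebra ℂ g] [Module ℂ M] [Module ℂ M']
    [LieModule ℂ g M] [LieModule ℂ g M'] : LieModule ℂ g (M × M') where
  smul_lie t x m := Prod.ext (smul_lie t x m.1) (smul_lie t x m.2)
  lie_smul t x m := Prod.ext (lie_smul t x m.1) (lie_smul t x m.2)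

end ProdLie


/-- A Borel subalgebra: a maximal solvable Lie subalgebra. -/
def IsBorel (g : Type*) [LieRing g] [LieAlgebra ℂ g] (b : LieSubalgebra ℂ g) : Prop :=
  LieAlgebra.IsSolvable ↥b ∧
    ∀ b' : LieSubalgebra ℂ g, LieAlgebra.IsSolvable ↥b' → b ≤ b' → b' = b

/-- A parabolic subalgebra `p = l ⊕ u` of `g` together with a Levi decomposition: the Levi
factor `l`, the nilradical `u` and the opposite nilradical `u⁻`, satisfying
`g = u⁻ ⊕ l ⊕ u`, `[l,u] ⊆ u`, `[l,u⁻] ⊆ u⁻`, `u, u⁻` nilpotent, and `p = l ⊔ u` contains a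
Borel subalgebra. -/
structure ParabolicDecomp (g : Type*) [LieRing g] [LieAlgebra ℂ g] where
  l : LieSubalgebra ℂ g
  u : LieSubalgebra ℂ g
  uminus : LieSubalgebra ℂ g
  lu : ∀ x ∈ l, ∀ y ∈ u, ⁅x, y⁆ ∈ u
  lum : ∀ x ∈ l, ∀ y ∈ uminus, ⁅x, y⁆ ∈ uminus
  u_nilpotent : LieRing.IsNilpotent ↥u
  um_nilpotent : LieRing.IsNilpotent ↥uminus
  sup_top : l.toSubmodule ⊔ u.toSubmodule ⊔ uminus.toSubmodule = ⊤
  disj_lu : Disjoint l.toSubmodule u.toSubmodule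
  disj_lum : Disjoint (l.toSubmodule ⊔ u.toSubmodule) uminus.toSubmodule
  parabolic : ∃ b : LieSubalgebra ℂ g, IsBorel g b ∧ b ≤ l ⊔ u

/-- The subspace `M^u` of vectors of a `g`-module `M` annihilated by the nilradical `u`. -/
def uInvariants {g : Type*} [LieRing g] [LieAlgebra ℂ g] (D : ParabolicDecomp g)
    (M : Type*) [AddCommGroup M] [Module ℂ M] [LieRingModule g M] [LieModule ℂ g M] :
    Submodule ℂ M where
  carrier := {v : M | ∀ x ∈ D.u, ⁅x, v⁆ = 0}
  add_mem' := by
    intro a b ha hb x hx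
    rw [lie_add, ha x hx, hb x hx, add_zero]
  zero_mem' := by
    intro x hx
    simp
  smul_mem' := by
    intro c a ha x hx
    rw [lie_smul, ha x hx, smul_zero]

/-- The almost-simple quotient `Ind_p(N)` of the parabolic induction
`U(g) ⊗_{U(p)} N` of an `l`-module `N` (with `u` acting by zero), encoded by its
characteristic properties: it contains a canonical copy `j : N ↪ M` of `N`, killed by `u`
and `l`-equivariant, which generates `M`; every non-zero `g`-submodule of `M` meets `j(N)`
non-trivially (almost-simplicity); and, by Poincaré–Birkhoff–Witt, `M = j(N) ⊕ u⁻·M`. -/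
structure AlmostSimpleInduction {g : Type*} [LieRing g] [LieAlgebra ℂ g]
    (D : ParabolicDecomp g)
    (N : Type*) [AddCommGroup N] [Module ℂ N] [LieRingModule D.l N] [LieModule ℂ D.l N]
    (M : Type*) [AddCommGroup M] [Module ℂ M] [LieRingModule g M] [LieModule ℂ g M] where
  j : N →ₗ[ℂ] M
  inj : Function.Injective j
  equivariant : ∀ (x : D.l) (n : N), j ⁅x, n⁆ = ⁅(x : g), j n⁆
  u_annihilates : ∀ x ∈ D.u, ∀ n : N, ⁅x, j n⁆ = 0
  generates : LieSubmodule.lieSpan ℂ g (Set.range j) = ⊤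
  almost_simple : ∀ Q : LieSubmodule ℂ g M, Q ≠ ⊥ → ∃ n : N, j n ≠ 0 ∧ j n ∈ Q
  pbw_compl : IsCompl (LinearMap.range j)
    (Submodule.span ℂ {m : M | ∃ x ∈ D.uminus, ∃ w : M, m = ⁅x, w⁆})

/-- Let `g` be a finite-dimensional complex semisimple Lie algebra, `p = l ⊕ u` a parabolic
subalgebra, and `φ : N ↪ N'` an embedding of weight `l`-modules with `N` simple.  Then the
almost-simple quotient `Ind_p(N)` embeds into the almost-simple quotient `Ind_p(N')` as
`g`-modules, compatibly with the canonical copies of `N` and `N'`. -/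
theorem almostSimpleInduction_embedding
    (g : Type*) [LieRing g] [LieAlgebra ℂ g] [FiniteDimensional ℂ g]
    [LieAlgebra.IsSemisimple ℂ g]
    (D : ParabolicDecomp g)
    (h : LieSubalgebra ℂ g) [h.IsCartanSubalgebra] (hhl : h ≤ D.l)
    (N : Type*) [AddCommGroup N] [Module ℂ N] [LieRingModule D.l N] [LieModule ℂ D.l N]
    (N' : Type*) [AddCommGroup N'] [Module ℂ N'] [LieRingModule D.l N'] [LieModule ℂ D.l N']
    (M : Type*) [AddCommGroup M] [Module ℂ M] [LieRingModule g M] [LieModule ℂ g M]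
    (M' : Type*) [AddCommGroup M'] [Module ℂ M'] [LieRingModule g M'] [LieModule ℂ g M']
    (asi : AlmostSimpleInduction D N M)
    (asi' : AlmostSimpleInduction D N' M')
    [Nontrivial N] (hNsimple : ∀ Q : LieSubmodule ℂ D.l N, Q = ⊥ ∨ Q = ⊤)
    (hNweight : Submodule.span ℂ {v : N | ∃ χ : g → ℂ, ∀ (x : g) (hx : x ∈ h),
      ⁅(⟨x, hhl hx⟩ : D.l), v⁆ = χ x • v} = ⊤)
    (hN'weight : Submodule.span ℂ {v : N' | ∃ χ : g → ℂ, ∀ (x : g) (hx : x ∈ h),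
      ⁅(⟨x, hhl hx⟩ : D.l), v⁆ = χ x • v} = ⊤)
    (φ : N →ₗ[ℂ] N') (hφinj : Function.Injective φ)
    (hφequiv : ∀ (x : D.l) (n : N), φ ⁅x, n⁆ = ⁅x, φ n⁆) :
    ∃ ψ : M →ₗ[ℂ] M', Function.Injective ψ ∧
      (∀ (x : g) (m : M), ψ ⁅x, m⁆ = ⁅x, ψ m⁆) ∧
      ∀ n : N, ψ (asi.j n) = asi'.j (φ n) := by
  classical
  -- the "u⁻ · M" subspaces appearing in `pbw_compl`
  set BM : Submodule ℂ M := Submodule.span ℂ {m : M | ∃ x ∈ D.uminus, ∃ w : M, m = ⁅x, w⁆}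
    with hBMdef
  set BM' : Submodule ℂ M' := Submodule.span ℂ {m : M' | ∃ x ∈ D.uminus, ∃ w : M', m = ⁅x, w⁆}
    with hBM'def
  -- the graph of `n ↦ (j n, j' (φ n))`
  set γ : N →ₗ[ℂ] M × M' := (asi.j).prod ((asi'.j).comp φ) with hγdef
  have hγ : ∀ n : N, γ n = (asi.j n, asi'.j (φ n)) := fun n => rfl
  set P : Submodule ℂ (M × M') := BM.prod BM' with hPdef
  set br : Submodule ℂ (M × M') → Submodule ℂ (M × M') :=
    fun S => Submodule.span ℂ {m : M × M' | ∃ x ∈ D.uminus, ∃ w ∈ S, m = ⁅x, w⁆} with hbrdef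
  set F : ℕ → Submodule ℂ (M × M') :=
    fun k => Nat.rec (LinearMap.range γ) (fun _ Fk => Fk ⊔ br Fk) k with hFdef
  have hF0 : F 0 = LinearMap.range γ := rfl
  have hFsucc : ∀ k, F (k + 1) = F k ⊔ br (F k) := fun k => rfl
  have hFmono : Monotone F := monotone_nat_of_le_succ fun k => by rw [hFsucc k]; exact le_sup_left
  -- decomposition of elements of g
  have hdec : ∀ x : g, ∃ a ∈ D.l, ∃ b ∈ D.u, ∃ c ∈ D.uminus, x = a + b + c := by
    intro x
    have hx : x ∈ D.l.toSubmodule ⊔ D.u.toSubmodule ⊔ D.uminus.toSubmodule := by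
      rw [D.sup_top]; exact Submodule.mem_top
    obtain ⟨y, hy, c, hc, hyc⟩ := Submodule.mem_sup.mp hx
    obtain ⟨a, ha, b, hb, hab⟩ := Submodule.mem_sup.mp hy
    exact ⟨a, ha, b, hb, c, hc, by rw [← hyc, ← hab]⟩
  -- basic bracket computations on the graph generators
  have hbrl : ∀ a, ∀ ha : a ∈ D.l, ∀ n : N, ⁅a, γ n⁆ = γ ⁅(⟨a, ha⟩ : D.l), n⁆ := by
    intro a ha n
    refine Prod.ext ?_ ?_
    · exact (asi.equivariant ⟨a, ha⟩ n).symm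
    · show ⁅a, asi'.j (φ n)⁆ = asi'.j (φ ⁅(⟨a, ha⟩ : D.l), n⁆)
      rw [hφequiv]
      exact (asi'.equivariant ⟨a, ha⟩ (φ n)).symm
  have hbru : ∀ b ∈ D.u, ∀ n : N, ⁅b, γ n⁆ = 0 := by
    intro b hb n
    exact Prod.ext (asi.u_annihilates b hb n) (asi'.u_annihilates b hb (φ n))
  have hbrum : ∀ c ∈ D.uminus, ∀ S : Submodule ℂ (M × M'), ∀ w ∈ S, ⁅c, w⁆ ∈ br S :=
    fun c hc S w hw => Submodule.subset_span ⟨c, hc, w, hw, rfl⟩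
  -- the key stability lemma
  have key : ∀ k, ∀ x : g, ∀ m ∈ F k, ⁅x, m⁆ ∈ F (k + 1) := by
    intro k
    induction k with
    | zero =>
      intro x m hm
      rw [hF0] at hm
      obtain ⟨n, rfl⟩ := LinearMap.mem_range.mp hm
      obtain ⟨a, ha, b, hb, c, hc, rfl⟩ := hdec x
      rw [add_lie, add_lie, hbru b hb n, add_zero, hFsucc 0]
      refine Submodule.add_mem _ ?_ ?_
      · refine Submodule.mem_sup_left ?_
        rw [hbrl a ha n, hF0]
        exact LinearMap.mem_range_self γ _
      · exact Submodule.mem_sup_right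
          (hbrum c hc (F 0) (γ n) (by rw [hF0]; exact LinearMap.mem_range_self γ n))
    | succ k ih =>
      intro x m hm
      rw [hFsucc k] at hm
      obtain ⟨m₁, hm₁, m₂, hm₂, rfl⟩ := Submodule.mem_sup.mp hm
      rw [lie_add]
      refine Submodule.add_mem _ (hFmono (Nat.le_succ (k + 1)) (ih x m₁ hm₁)) ?_
      refine Submodule.span_induction (p := fun m _ => ⁅x, m⁆ ∈ F (k + 1 + 1)) ?_ ?_ ?_ ?_ hm₂
      · rintro m ⟨y, hy, w, hw, rfl⟩
        rw [leibniz_lie]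
        refine Submodule.add_mem _ (hFmono (Nat.le_succ (k + 1)) (ih ⁅x, y⁆ w hw)) ?_
        rw [hFsucc (k + 1)]
        exact Submodule.mem_sup_right (hbrum y hy (F (k + 1)) _ (ih x w hw))
      · simp
      · intro a b _ _ hpa hpb
        rw [lie_add]
        exact Submodule.add_mem _ hpa hpb
      · intro t a _ hpa
        rw [lie_smul]
        exact Submodule.smul_mem _ t hpa
  -- each F k sits inside Γ ⊔ P
  have hbrP : ∀ S : Submodule ℂ (M × M'), br S ≤ P := by
    intro S
    rw [hbrdef]
    refine Submodule.span_le.mpr ?_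
    rintro m ⟨x, hx, w, _, rfl⟩
    exact ⟨Submodule.subset_span ⟨x, hx, w.1, rfl⟩, Submodule.subset_span ⟨x, hx, w.2, rfl⟩⟩
  have hFP : ∀ k, F k ≤ LinearMap.range γ ⊔ P := by
    intro k
    induction k with
    | zero => rw [hF0]; exact le_sup_left
    | succ k ih =>
      rw [hFsucc k]
      exact sup_le ih (le_trans (hbrP (F k)) le_sup_right)
  -- the Lie submodule W generated by the graph
  have hWdir : Directed (· ≤ ·) F := hFmono.directed_le
  let W : LieSubmodule ℂ g (M × M') :=
    { toSubmodule := ⨆ k, F k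
      lie_mem := by
        intro x m hm
        obtain ⟨k, hk⟩ := (Submodule.mem_iSup_of_directed F hWdir).mp hm
        exact (Submodule.mem_iSup_of_directed F hWdir).mpr ⟨k + 1, key k x m hk⟩ }
  have hWmem : ∀ m : M × M', m ∈ W ↔ ∃ k, m ∈ F k := fun m =>
    Submodule.mem_iSup_of_directed F hWdir
  have hWle : ∀ m ∈ W, m ∈ LinearMap.range γ ⊔ P := by
    intro m hm
    obtain ⟨k, hk⟩ := (hWmem m).mp hm
    exact hFP k hk
  have hγW : ∀ n : N, γ n ∈ W := fun n =>
    (hWmem _).mpr ⟨0, by rw [hF0]; exact LinearMap.mem_range_self γ n⟩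
  -- the "vertical kernel" Q of W, as a Lie submodule of M'
  let Q : LieSubmodule ℂ g M' :=
    { toSubmodule := Submodule.comap (LinearMap.inr ℂ M M') ((⨆ k, F k : Submodule ℂ (M × M')))
      lie_mem := by
        intro x m' hm'
        have h1 : (((0 : M), m') : M × M') ∈ W := hm'
        have h2 := W.lie_mem (x := x) h1
        have h3 : ⁅x, (((0 : M), m') : M × M')⁆ = (((0 : M), ⁅x, m'⁆) : M × M') := by
          refine Prod.ext ?_ rfl
          exact lie_zero x
        rw [h3] at h2
        exact h2 }
  have hQmem : ∀ m' : M', m' ∈ Q ↔ (((0 : M), m') : M × M') ∈ W := fun m' => Iff.rfl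
  -- Q meets j'(N') trivially
  have hQj : ∀ n' : N', asi'.j n' ∈ Q → n' = 0 := by
    intro n' hn'
    have h1 : (((0 : M), asi'.j n') : M × M') ∈ LinearMap.range γ ⊔ P :=
      hWle _ ((hQmem _).mp hn')
    obtain ⟨t, ht, p, hp, hsum⟩ := Submodule.mem_sup.mp h1
    obtain ⟨n, rfl⟩ := LinearMap.mem_range.mp ht
    have h2 : asi.j n + p.1 = 0 := congrArg Prod.fst hsum
    have h3 : asi'.j (φ n) + p.2 = asi'.j n' := congrArg Prod.snd hsum
    have hjn : asi.j n ∈ BM := by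
      rw [eq_neg_of_add_eq_zero_left h2]
      exact Submodule.neg_mem _ hp.1
    have hjn0 : asi.j n = 0 :=
      Submodule.disjoint_def.mp asi.pbw_compl.disjoint _ (LinearMap.mem_range_self asi.j n) hjn
    have hn0 : n = 0 := asi.inj (by rw [hjn0, map_zero])
    have h4 : asi'.j n' ∈ BM' := by
      rw [← h3, hn0, map_zero, map_zero, zero_add]
      exact hp.2
    have h5 : asi'.j n' = 0 :=
      Submodule.disjoint_def.mp asi'.pbw_compl.disjoint _ (LinearMap.mem_range_self asi'.j n') h4
    exact asi'.inj (by rw [h5, map_zero])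
  have hQbot : Q = ⊥ := by
    by_contra hne
    obtain ⟨n', hn1, hn2⟩ := asi'.almost_simple Q hne
    exact hn1 (by rw [hQj n' hn2, map_zero])
  have hzero : ∀ m' : M', (((0 : M), m') : M × M') ∈ W → m' = 0 := by
    intro m' hm'
    have : m' ∈ Q := (hQmem _).mpr hm'
    rw [hQbot] at this
    simpa using this
  -- graph uniqueness
  have huniq : ∀ (m : M) (a b : M'), ((m, a) : M × M') ∈ W → ((m, b) : M × M') ∈ W → a = b := by
    intro m a b ha hb
    have hsub : (((m, a) : M × M') - (m, b)) ∈ W := Submodule.sub_mem _ ha hb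
    have h1 : (((m, a) : M × M') - (m, b)) = (((0 : M), a - b) : M × M') := by
      refine Prod.ext ?_ rfl
      exact sub_self m
    rw [h1] at hsub
    exact sub_eq_zero.mp (hzero _ hsub)
  -- the first projection of W is all of M
  let S : LieSubmodule ℂ g M :=
    { toSubmodule := Submodule.map (LinearMap.fst ℂ M M') ((⨆ k, F k : Submodule ℂ (M × M')))
      lie_mem := by
        rintro x m ⟨w, hw, rfl⟩
        exact ⟨⁅x, w⁆, W.lie_mem hw, rfl⟩ }
  have hStop : S = ⊤ := by
    rw [eq_top_iff, ← asi.generates]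
    refine LieSubmodule.lieSpan_le.mpr ?_
    rintro m ⟨n, rfl⟩
    exact ⟨γ n, hγW n, rfl⟩
  -- construct ψ via the graph
  let f : ((⨆ k, F k : Submodule ℂ (M × M'))) →ₗ[ℂ] M :=
    (LinearMap.fst ℂ M M').comp (Submodule.subtype _)
  have hfval : ∀ w, f w = (w : M × M').1 := fun w => rfl
  have hfsurj : Function.Surjective f := by
    intro m
    have hm : m ∈ S := by rw [hStop]; exact LieSubmodule.mem_top m
    obtain ⟨w, hw, hw1⟩ := hm
    exact ⟨⟨w, hw⟩, hw1⟩
  have hfinj : Function.Injective f := by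
    intro w₁ w₂ hww
    have h1 : (w₁ : M × M').1 = (w₂ : M × M').1 := hww
    have hw1 : (((w₁ : M × M').1, (w₁ : M × M').2) : M × M') ∈ W := by
      rw [Prod.mk.eta]; exact w₁.2
    have hw2 : (((w₁ : M × M').1, (w₂ : M × M').2) : M × M') ∈ W := by
      rw [h1, Prod.mk.eta]; exact w₂.2
    have h2 : (w₁ : M × M').2 = (w₂ : M × M').2 := huniq _ _ _ hw1 hw2
    exact Subtype.ext (Prod.ext h1 h2)
  let e : ((⨆ k, F k : Submodule ℂ (M × M'))) ≃ₗ[ℂ] M := LinearEquiv.ofBijective f ⟨hfinj, hfsurj⟩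
  let ψ : M →ₗ[ℂ] M' :=
    (LinearMap.snd ℂ M M').comp ((Submodule.subtype _).comp e.symm.toLinearMap)
  have hψval : ∀ m : M, ψ m = ((e.symm m : M × M')).2 := fun m => rfl
  have hψmem : ∀ m : M, ((m, ψ m) : M × M') ∈ W := by
    intro m
    have h1 : f (e.symm m) = m := e.apply_symm_apply m
    have h3 : ((e.symm m : M × M')) = ((m, ψ m) : M × M') := Prod.ext h1 rfl
    have h4 : ((e.symm m : M × M')) ∈ W := (e.symm m).2
    rw [h3] at h4
    exact h4
  have hcompat : ∀ n : N, ψ (asi.j n) = asi'.j (φ n) := by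
    intro n
    exact huniq (asi.j n) _ _ (hψmem (asi.j n)) (hγW n)
  have hequiv : ∀ (x : g) (m : M), ψ ⁅x, m⁆ = ⁅x, ψ m⁆ := by
    intro x m
    refine huniq ⁅x, m⁆ _ _ (hψmem _) ?_
    exact W.lie_mem (hψmem m)
  have hψinj : Function.Injective ψ := by
    let K : LieSubmodule ℂ g M :=
      { toSubmodule := LinearMap.ker ψ
        lie_mem := by
          intro x m hm
          have hm' : ψ m = 0 := hm
          have : ψ ⁅x, m⁆ = 0 := by rw [hequiv x m, hm', lie_zero]
          exact this }
    have hK : K = ⊥ := by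
      by_contra hne
      obtain ⟨n, hn1, hn2⟩ := asi.almost_simple K hne
      have h1 : ψ (asi.j n) = 0 := hn2
      rw [hcompat n] at h1
      have h2 : φ n = 0 := asi'.inj (by rw [h1, map_zero])
      have h3 : n = 0 := hφinj (by rw [h2, map_zero])
      exact hn1 (by rw [h3, map_zero])
    intro a b hab
    have h1 : ψ (a - b) = 0 := by rw [map_sub, hab, sub_self]
    have h2 : a - b ∈ K := h1
    rw [hK] at h2
    have h3 : a - b = 0 := by simpa using h2
    exact sub_eq_zero.mp h3
  exact ⟨ψ, hψinj, hequiv, hcompat⟩
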